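/- arXiv:1802.09084 — 4 statements merged into one kernel-verified Lean document; each statement's English description precedes it below -/
import Mathlib

section
/- Let m : S_∞ → ℝ₊ be a map with m(∅) = 0, where S_∞ = {∅} ∪ {{w} : w ∈ A^*} ∪ {wA^∞ : w ∈ A^*}. Then there exists a unique measure 𝑚̃ on Σ_{A^∞} extending m if and only if for all w ∈ A^*, m(wA^∞) = m({w}) + Σ_{a∈A} m(waA^∞). -/
open MeasureTheory

/-- Finite and infinite words over `A`. -/
def Words (A : Type*) : Type _ := List A ⊕ (ℕ → A)

/-- Concatenation of a finite word with a finite or infinite word. -/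
def wcat {A : Type*} (w : List A) : Words A → Words A
  | Sum.inl u => Sum.inl (w ++ u)
  | Sum.inr f => Sum.inr fun n => if h : n < w.length then w.get ⟨n, h⟩ else f (n - w.length)

/-- The cone `wA^∞` of words with prefix `w`. -/
def cone {A : Type*} (w : List A) : Set (Words A) := Set.range (wcat w)

/-- The generating family `S_∞`. -/
def Sinf (A : Type*) : Set (Set (Words A)) :=
  {∅} ∪ (Set.range fun w : List A => ({Sum.inl w} : Set (Words A))) ∪
    Set.range (cone (A := A))

instance {A : Type*} : MeasurableSpace (Words A) := MeasurableSpace.generateFrom (Sinf A)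

namespace WordsAux

variable {A : Type*}

lemma wcat_wcat (w t : List A) (z : Words A) : wcat w (wcat t z) = wcat (w ++ t) z := by
  cases z with
  | inl u => simp [wcat, List.append_assoc]; rfl
  | inr f =>
    show Sum.inr _ = Sum.inr _
    congr 1
    funext n
    rcases lt_or_ge n w.length with h | h
    · rw [dif_pos h, dif_pos (by simp [List.length_append]; omega)]
      simp [List.get_eq_getElem, List.getElem_append_left h]
    · rw [dif_neg (by omega)]
      show (if h : n - w.length < t.length then t.get ⟨n - w.length, h⟩
        else f (n - w.length - t.length)) = _
      rcases lt_or_ge (n - w.length) t.length with h2 | h2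
      · rw [dif_pos h2, dif_pos (show n < (w ++ t).length by
          rw [List.length_append]; omega)]
        simp only [List.get_eq_getElem]
        rw [List.getElem_append_right (by omega)]
      · rw [dif_neg (by omega), dif_neg (show ¬ n < (w ++ t).length by
          rw [List.length_append]; omega)]
        congr 1
        rw [List.length_append]
        omega

lemma mem_cone_inl {w u : List A} : Sum.inl u ∈ cone w ↔ w <+: u := by
  constructor
  · rintro ⟨z, hz⟩
    cases z with
    | inl v =>
      simp only [wcat] at hz
      injection hz with hz
      exact ⟨v, hz⟩
    | inr f => simp [wcat] at hz
  · rintro ⟨t, rfl⟩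
    exact ⟨Sum.inl t, rfl⟩

lemma mem_cone_inr {w : List A} {f : ℕ → A} :
    Sum.inr f ∈ cone w ↔ ∀ i (h : i < w.length), f i = w.get ⟨i, h⟩ := by
  constructor
  · rintro ⟨z, hz⟩
    cases z with
    | inl v => simp [wcat] at hz
    | inr g =>
      simp only [wcat] at hz
      injection hz with hz
      intro i h
      rw [← congrFun hz i, dif_pos h]
  · intro h
    refine ⟨Sum.inr (fun n => f (n + w.length)), ?_⟩
    show Sum.inr _ = Sum.inr _
    congr 1
    funext n
    rcases lt_or_ge n w.length with hn | hn
    · rw [dif_pos hn, h n hn]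
    · rw [dif_neg (by omega)]
      exact congrArg f (Nat.sub_add_cancel hn)

lemma cone_nil : cone ([] : List A) = Set.univ := by
  ext z
  simp only [Set.mem_univ, iff_true]
  cases z with
  | inl u => exact ⟨Sum.inl u, rfl⟩
  | inr f => exact ⟨Sum.inr f, by simp [wcat]; rfl⟩

lemma cone_mono {w v : List A} (h : w <+: v) : cone v ⊆ cone w := by
  obtain ⟨t, rfl⟩ := h
  rintro z ⟨p, rfl⟩
  exact ⟨wcat t p, wcat_wcat w t p⟩

lemma self_mem_cone (w : List A) : Sum.inl w ∈ cone w :=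
  mem_cone_inl.2 (List.prefix_refl w)

/-- membership lemmas for Sinf -/
lemma empty_mem_Sinf : (∅ : Set (Words A)) ∈ Sinf A := Or.inl (Or.inl rfl)

lemma singleton_mem_Sinf (w : List A) : ({Sum.inl w} : Set (Words A)) ∈ Sinf A :=
  Or.inl (Or.inr ⟨w, rfl⟩)

lemma cone_mem_Sinf (w : List A) : cone w ∈ Sinf A := Or.inr ⟨w, rfl⟩

lemma measurableSet_of_mem_Sinf {S : Set (Words A)} (h : S ∈ Sinf A) : MeasurableSet S :=
  MeasurableSpace.measurableSet_generateFrom h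

lemma prefix_of_agree {w v : List A} {f : ℕ → A}
    (hw : ∀ i (h : i < w.length), f i = w.get ⟨i, h⟩)
    (hv : ∀ i (h : i < v.length), f i = v.get ⟨i, h⟩)
    (hle : w.length ≤ v.length) : w <+: v := by
  have hwv : w = v.take w.length := by
    apply List.ext_getElem
    · rw [List.length_take]; omega
    · intro i h1 h2
      rw [List.getElem_take]
      simp only [List.get_eq_getElem] at hw hv
      rw [← hw i h1, ← hv i (by omega)]
  rw [hwv]
  exact List.take_prefix _ _

lemma comparable_of_inter_nonempty {w v : List A}
    (h : (cone w ∩ cone v).Nonempty) : w <+: v ∨ v <+: w := by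
  obtain ⟨z, hzw, hzv⟩ := h
  cases z with
  | inl u =>
    exact List.prefix_or_prefix_of_prefix (mem_cone_inl.1 hzw) (mem_cone_inl.1 hzv)
  | inr f =>
    rcases le_total w.length v.length with hle | hle
    · exact Or.inl (prefix_of_agree (mem_cone_inr.1 hzw) (mem_cone_inr.1 hzv) hle)
    · exact Or.inr (prefix_of_agree (mem_cone_inr.1 hzv) (mem_cone_inr.1 hzw) hle)

lemma isPiSystem_Sinf : IsPiSystem (Sinf A) := by
  rintro s hs t ht hst
  rcases hs with (rfl | ⟨w, rfl⟩) | ⟨w, rfl⟩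
  · simp at hst
  all_goals rcases ht with (rfl | ⟨v, rfl⟩) | ⟨v, rfl⟩
  · simp at hst
  · obtain ⟨z, hz1, hz2⟩ := hst
    simp only [Set.mem_singleton_iff] at hz1 hz2
    subst hz1
    have : w = v := by injection hz2
    subst this
    rw [Set.inter_self]
    exact singleton_mem_Sinf w
  · obtain ⟨z, hz1, hz2⟩ := hst
    simp only [Set.mem_singleton_iff] at hz1
    subst hz1
    have : ({Sum.inl w} : Set (Words A)) ∩ cone v = {Sum.inl w} := by
      apply Set.inter_eq_self_of_subset_left
      exact Set.singleton_subset_iff.2 hz2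
    rw [this]; exact singleton_mem_Sinf w
  · simp at hst
  · obtain ⟨z, hz1, hz2⟩ := hst
    simp only [Set.mem_singleton_iff] at hz2
    subst hz2
    have : cone w ∩ ({Sum.inl v} : Set (Words A)) = {Sum.inl v} := by
      apply Set.inter_eq_self_of_subset_right
      exact Set.singleton_subset_iff.2 hz1
    rw [this]; exact singleton_mem_Sinf v
  · rcases comparable_of_inter_nonempty hst with h | h
    · rw [Set.inter_eq_self_of_subset_right (cone_mono h)]
      exact cone_mem_Sinf v
    · rw [Set.inter_eq_self_of_subset_left (cone_mono h)]
      exact cone_mem_Sinf w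

lemma inl_not_mem_cone_append {w : List A} {a : A} : Sum.inl w ∉ cone (w ++ [a]) := by
  intro h
  have := (mem_cone_inl.1 h).length_le
  simp at this

lemma getElem_append_singleton (w : List A) (a : A) :
    (w ++ [a])[w.length]'(by simp) = a := by
  rw [List.getElem_append_right (le_refl w.length)]
  simp

lemma disjoint_cone_sibling {w : List A} {a b : A} (hab : a ≠ b) :
    Disjoint (cone (w ++ [a])) (cone (w ++ [b])) := by
  rw [Set.disjoint_left]
  intro z hza hzb
  apply hab
  cases z with
  | inl u =>
    have h1 := mem_cone_inl.1 hza
    have h2 := mem_cone_inl.1 hzb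
    have heq : w ++ [a] = w ++ [b] := by
      rcases List.prefix_or_prefix_of_prefix h1 h2 with h | h
      · exact h.eq_of_length (by simp)
      · exact (h.eq_of_length (by simp)).symm
    have := List.append_cancel_left heq
    simpa using this
  | inr f =>
    have h1 := (mem_cone_inr.1 hza) w.length (by simp)
    have h2 := (mem_cone_inr.1 hzb) w.length (by simp)
    rw [List.get_eq_getElem, getElem_append_singleton] at h1 h2
    rw [← h1, ← h2]

lemma cone_eq_union (w : List A) :
    cone w = {Sum.inl w} ∪ ⋃ a : A, cone (w ++ [a]) := by
  ext z
  constructor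
  · rintro ⟨p, rfl⟩
    cases p with
    | inl u =>
      cases u with
      | nil => left; simp [wcat]; exact rfl
      | cons a u =>
        right
        refine Set.mem_iUnion.2 ⟨a, ?_⟩
        rw [show wcat w (Sum.inl (a :: u)) = wcat (w ++ [a]) (Sum.inl u) from ?_]
        · exact ⟨Sum.inl u, rfl⟩
        · simp [wcat]; rfl
    | inr f =>
      right
      refine Set.mem_iUnion.2 ⟨f 0, ?_⟩
      rw [show wcat w (Sum.inr f) = wcat (w ++ [f 0]) (Sum.inr fun n => f (n + 1)) from ?_]
      · exact ⟨_, rfl⟩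
      · refine Eq.trans ?_ (wcat_wcat w [f 0] (Sum.inr fun n => f (n + 1)))
        congr 1
        show Sum.inr _ = Sum.inr _
        congr 1
        funext n
        cases n with
        | zero => simp
        | succ k => simp

  · rintro (hz | hz)
    · replace hz : z = Sum.inl w := hz
      subst hz
      exact self_mem_cone w
    · obtain ⟨a, ha⟩ := Set.mem_iUnion.1 hz
      exact cone_mono ⟨[a], rfl⟩ ha

section Construction

variable [Fintype A] (m : Set (Words A) → NNReal)

/-- The length of the interval allotted to the atom at `w` plus the cones of the
children `w ++ [b]` for letters `b` smaller than `a`. -/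
noncomputable def stepR (w : List A) (a : A) : ℝ :=
  (m {Sum.inl w} : ℝ) +
    ∑ b ∈ Finset.univ.filter (fun b => Fintype.equivFin A b < Fintype.equivFin A a),
      (m (cone (w ++ [b])) : ℝ)

/-- Left endpoints, with explicit context for structural recursion. -/
noncomputable def LL : List A → List A → ℝ
  | _, [] => 0
  | ctx, a :: u => stepR m ctx a + LL (ctx ++ [a]) u

/-- Left endpoint of the interval allotted to a word `w`. -/
noncomputable def L (w : List A) : ℝ := LL m [] w

/-- The interval allotted to the cone of `w`. -/
noncomputable def I (w : List A) : Set ℝ :=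
  Set.Ico (L m w) (L m w + (m (cone w) : ℝ))

/-- The interval allotted to the atom at `w`. -/
noncomputable def J (w : List A) : Set ℝ :=
  Set.Ico (L m w) (L m w + (m {Sum.inl w} : ℝ))

lemma stepR_nonneg (w : List A) (a : A) : 0 ≤ stepR m w a := by
  unfold stepR
  positivity

lemma at_le_stepR (w : List A) (a : A) : (m {Sum.inl w} : ℝ) ≤ stepR m w a := by
  unfold stepR
  have : (0:ℝ) ≤ ∑ b ∈ Finset.univ.filter
      (fun b => Fintype.equivFin A b < Fintype.equivFin A a), (m (cone (w ++ [b])) : ℝ) := by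
    positivity
  linarith

lemma LL_append (u : List A) : ∀ (ctx : List A) (a : A),
    LL m ctx (u ++ [a]) = LL m ctx u + stepR m (ctx ++ u) a := by
  induction u with
  | nil => intro ctx a; simp [LL]
  | cons b u ih =>
    intro ctx a
    show stepR m ctx b + LL m (ctx ++ [b]) (u ++ [a]) =
      (stepR m ctx b + LL m (ctx ++ [b]) u) + stepR m (ctx ++ b :: u) a
    rw [ih (ctx ++ [b]) a, List.append_assoc, List.singleton_append]
    ring

lemma L_append (w : List A) (a : A) : L m (w ++ [a]) = L m w + stepR m w a := by
  unfold L
  rw [LL_append]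
  simp

variable (hm : ∀ w : List A,
  m (cone w) = m {Sum.inl w} + ∑ a : A, m (cone (w ++ [a])))

include hm

lemma c_eq (w : List A) : (m (cone w) : ℝ) =
    (m {Sum.inl w} : ℝ) + ∑ a : A, (m (cone (w ++ [a])) : ℝ) := by
  have := hm w
  push_cast [this]
  ring

lemma stepR_add_le (w : List A) (a : A) :
    stepR m w a + (m (cone (w ++ [a])) : ℝ) ≤ (m (cone w) : ℝ) := by
  classical
  rw [c_eq m hm w]
  unfold stepR
  have hsub : insert a (Finset.univ.filter
      (fun b => Fintype.equivFin A b < Fintype.equivFin A a)) ⊆ Finset.univ :=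
    Finset.subset_univ _
  have hnotmem : a ∉ Finset.univ.filter
      (fun b => Fintype.equivFin A b < Fintype.equivFin A a) := by
    simp
  have := Finset.sum_le_sum_of_subset_of_nonneg hsub
    (fun b _ _ => (m (cone (w ++ [b]))).coe_nonneg)
  rw [Finset.sum_insert hnotmem] at this
  linarith

lemma stepR_sibling {w : List A} {a b : A}
    (hab : Fintype.equivFin A a < Fintype.equivFin A b) :
    stepR m w a + (m (cone (w ++ [a])) : ℝ) ≤ stepR m w b := by
  classical
  unfold stepR
  have hnotmem : a ∉ Finset.univ.filter
      (fun c => Fintype.equivFin A c < Fintype.equivFin A a) := by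
    simp
  have hsub : insert a (Finset.univ.filter
      (fun c => Fintype.equivFin A c < Fintype.equivFin A a)) ⊆
      Finset.univ.filter (fun c => Fintype.equivFin A c < Fintype.equivFin A b) := by
    intro c hc
    simp only [Finset.mem_insert, Finset.mem_filter, Finset.mem_univ, true_and] at hc ⊢
    rcases hc with rfl | hc
    · exact hab
    · exact hc.trans hab
  have := Finset.sum_le_sum_of_subset_of_nonneg hsub
    (fun c _ _ => (m (cone (w ++ [c]))).coe_nonneg)
  rw [Finset.sum_insert hnotmem] at this
  linarith

lemma I_append_subset (w : List A) (a : A) : I m (w ++ [a]) ⊆ I m w := by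
  unfold I
  apply Set.Ico_subset_Ico
  · rw [L_append]
    have := stepR_nonneg m w a
    linarith
  · rw [L_append]
    have := stepR_add_le m hm w a
    linarith

lemma I_prefix_subset {w v : List A} (h : w <+: v) : I m v ⊆ I m w := by
  obtain ⟨t, rfl⟩ := h
  induction t using List.reverseRecOn with
  | nil => simp
  | append_singleton t a ih =>
    rw [← List.append_assoc]
    exact (I_append_subset m hm (w ++ t) a).trans ih

lemma J_subset_I (w : List A) : J m w ⊆ I m w := by
  unfold J I
  apply Set.Ico_subset_Ico_right
  have h := c_eq m hm w
  have : (0:ℝ) ≤ ∑ a : A, (m (cone (w ++ [a])) : ℝ) := by positivity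
  linarith

lemma J_disjoint_I_append (w : List A) (a : A) : Disjoint (J m w) (I m (w ++ [a])) := by
  rw [Set.disjoint_left]
  rintro x ⟨_, hx2⟩ ⟨hx3, _⟩
  rw [L_append] at hx3
  have := at_le_stepR m w a
  linarith

lemma I_sibling_disjoint {w : List A} {a b : A} (hab : a ≠ b) :
    Disjoint (I m (w ++ [a])) (I m (w ++ [b])) := by
  have key : ∀ a b : A, Fintype.equivFin A a < Fintype.equivFin A b →
      Disjoint (I m (w ++ [a])) (I m (w ++ [b])) := by
    intro a b hab
    rw [Set.disjoint_left]
    rintro x ⟨_, hx2⟩ ⟨hx3, _⟩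
    rw [L_append] at hx2 hx3
    have := stepR_sibling m hm (w := w) hab
    linarith
  rcases lt_trichotomy (Fintype.equivFin A a) (Fintype.equivFin A b) with h | h | h
  · exact key a b h
  · exact absurd ((Fintype.equivFin A).injective h) hab
  · exact (key b a h).symm

lemma exists_firstdiff : ∀ (u v : List A), u ≠ v → u.length = v.length →
    ∃ (p : List A) (a b : A) (s t : List A),
      a ≠ b ∧ u = p ++ a :: s ∧ v = p ++ b :: t := by
  intro u
  induction u with
  | nil => intro v h hl; exact absurd (List.length_eq_zero_iff.1 hl.symm).symm h
  | cons x u ih =>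
    intro v h hl
    cases v with
    | nil => simp at hl
    | cons y v =>
      by_cases hxy : x = y
      · subst hxy
        have huv : u ≠ v := fun he => h (by rw [he])
        obtain ⟨p, a, b, s, t, hab, hu, hv⟩ := ih v huv (by simpa using hl)
        exact ⟨x :: p, a, b, s, t, hab, by simp [hu], by simp [hv]⟩
      · exact ⟨[], x, y, u, v, hxy, rfl, rfl⟩

lemma I_disjoint_same_length {u v : List A} (h : u ≠ v) (hl : u.length = v.length) :
    Disjoint (I m u) (I m v) := by
  obtain ⟨p, a, b, s, t, hab, rfl, rfl⟩ := exists_firstdiff m hm u v h hl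
  have h1 : I m (p ++ a :: s) ⊆ I m (p ++ [a]) :=
    I_prefix_subset m hm ⟨s, by simp⟩
  have h2 : I m (p ++ b :: t) ⊆ I m (p ++ [b]) :=
    I_prefix_subset m hm ⟨t, by simp⟩
  exact (I_sibling_disjoint m hm hab).mono h1 h2

lemma J_disjoint_I_of_strict_prefix {u w : List A} (h : u <+: w) (hne : u ≠ w) :
    Disjoint (J m u) (I m w) := by
  obtain ⟨t, rfl⟩ := h
  cases t with
  | nil => exact absurd (by simp) hne
  | cons a t =>
    refine (J_disjoint_I_append m hm u a).mono_right ?_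
    exact I_prefix_subset m hm ⟨t, by simp⟩

lemma prefix_of_J_inter_I {u w : List A} {x : ℝ} (hJ : x ∈ J m u) (hI : x ∈ I m w) :
    w <+: u := by
  have hJI : x ∈ I m u := J_subset_I m hm u hJ
  rcases le_or_gt w.length u.length with hle | hlt
  · by_contra hpre
    have hne : u.take w.length ≠ w := by
      intro he
      exact hpre (he ▸ List.take_prefix _ _)
    have hx1 : x ∈ I m (u.take w.length) :=
      I_prefix_subset m hm (List.take_prefix _ _) hJI
    exact Set.disjoint_left.mp
      (I_disjoint_same_length m hm hne (by rw [List.length_take]; omega)) hx1 hI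
  · exfalso
    by_cases hpre : u = w.take u.length
    · have hu : u <+: w := hpre ▸ List.take_prefix _ _
      have hne : u ≠ w := by
        intro he
        rw [he] at hlt
        exact lt_irrefl _ hlt
      exact Set.disjoint_left.mp (J_disjoint_I_of_strict_prefix m hm hu hne) hJ hI
    · have hx1 : x ∈ I m (w.take u.length) :=
        I_prefix_subset m hm (List.take_prefix _ _) hI
      exact Set.disjoint_left.mp
        (I_disjoint_same_length m hm hpre (by rw [List.length_take]; omega)) hJI hx1

lemma J_pairwise_disjoint {u v : List A} (h : u ≠ v) : Disjoint (J m u) (J m v) := by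
  rw [Set.disjoint_left]
  intro x hxu hxv
  have h1 : v <+: u := prefix_of_J_inter_I m hm hxu (J_subset_I m hm v hxv)
  have h2 : u <+: v := prefix_of_J_inter_I m hm hxv (J_subset_I m hm u hxu)
  exact h (h2.eq_of_length (le_antisymm h2.length_le h1.length_le))

omit hm in
lemma exists_mem_Ico_nat (S : ℕ → ℝ) (k : ℕ) (x : ℝ) (h0 : S 0 ≤ x) (hk : x < S k) :
    ∃ j < k, S j ≤ x ∧ x < S (j + 1) := by
  induction k with
  | zero => exact absurd hk (not_lt.2 h0)
  | succ n ih =>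
    by_cases hx : S n ≤ x
    · exact ⟨n, n.lt_succ_self, hx, hk⟩
    · obtain ⟨j, hj, h⟩ := ih (lt_of_not_ge hx)
      exact ⟨j, hj.trans n.lt_succ_self, h⟩

lemma exists_step {w : List A} {x : ℝ} (hx : x ∈ I m w)
    (hx2 : L m w + (m {Sum.inl w} : ℝ) ≤ x) : ∃ a, x ∈ I m (w ++ [a]) := by
  classical
  set e := Fintype.equivFin A with he
  set S : ℕ → ℝ := fun j => L m w + (m {Sum.inl w} : ℝ) +
    ∑ b ∈ Finset.univ.filter (fun b => (e b : ℕ) < j), (m (cone (w ++ [b])) : ℝ) with hS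
  have hS0 : S 0 = L m w + (m {Sum.inl w} : ℝ) := by
    simp [hS]
  have hSk : S (Fintype.card A) = L m w + (m (cone w) : ℝ) := by
    have hfil : Finset.univ.filter (fun b => ((e b : ℕ) < Fintype.card A)) = Finset.univ := by
      apply Finset.filter_true_of_mem
      intro b _
      exact (e b).isLt
    rw [hS]
    simp only [hfil]
    rw [c_eq m hm w]
    ring
  obtain ⟨j, hjk, hj1, hj2⟩ := exists_mem_Ico_nat S (Fintype.card A) x
    (by rw [hS0]; exact hx2) (by rw [hSk]; exact hx.2)
  set a := e.symm ⟨j, hjk⟩ with ha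
  have hval : (e a : ℕ) = j := by simp [ha]
  have hfil1 : Finset.univ.filter (fun b => e b < e a) =
      Finset.univ.filter (fun b => (e b : ℕ) < j) := by
    apply Finset.filter_congr
    intro b _
    simp [Fin.lt_def, hval]
  have hLa : L m (w ++ [a]) = S j := by
    rw [L_append]
    unfold stepR
    rw [hfil1, hS]
    ring
  have hins : Finset.univ.filter (fun b => (e b : ℕ) < j + 1) =
      insert a (Finset.univ.filter (fun b => (e b : ℕ) < j)) := by
    ext b
    simp only [Finset.mem_filter, Finset.mem_univ, true_and, Finset.mem_insert]
    constructor
    · intro hb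
      rcases Nat.lt_succ_iff_lt_or_eq.mp hb with h | h
      · exact Or.inr h
      · exact Or.inl (e.injective (Fin.ext (h.trans hval.symm)))
    · rintro (rfl | hb)
      · omega
      · omega
  have hnotmem : a ∉ Finset.univ.filter (fun b => (e b : ℕ) < j) := by
    simp [hval]
  have hSj1 : S (j + 1) = L m (w ++ [a]) + (m (cone (w ++ [a])) : ℝ) := by
    rw [hLa, hS]
    simp only
    rw [hins, Finset.sum_insert hnotmem]
    ring
  refine ⟨a, ?_, ?_⟩
  · rw [hLa]; exact hj1
  · rw [← hSj1]; exact hj2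

/-- A word is "stopped" at `x` exactly when `x` lies in its atom interval. -/
lemma stop_iff {w : List A} {x : ℝ} (hx : x ∈ I m w) :
    (¬ ∃ a, x ∈ I m (w ++ [a])) ↔ x ∈ J m w := by
  constructor
  · intro h
    refine ⟨hx.1, ?_⟩
    by_contra h2
    exact h (exists_step m hm hx (not_lt.1 h2))
  · rintro ⟨_, hx2⟩ ⟨a, ha⟩
    exact Set.disjoint_left.mp (J_disjoint_I_append m hm w a) ⟨hx.1, hx2⟩ ha

omit hm

open scoped Classical in
noncomputable def chain (x : ℝ) : ℕ → List A
  | 0 => []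
  | n + 1 =>
    if h : ∃ a, x ∈ I m (chain x n ++ [a]) then chain x n ++ [h.choose] else chain x n

open scoped Classical in
noncomputable def g (x : ℝ) : Words A :=
  if h : ∃ w : List A, x ∈ J m w then Sum.inl h.choose
  else if h2 : ∀ n : ℕ, ∃ a : A, x ∈ I m (chain m x n ++ [a]) then
    Sum.inr (fun n => (h2 n).choose)
  else Sum.inl []

open scoped Classical in
/-- Junk set collecting points outside the base interval (they map to `Sum.inl []`). -/
noncomputable def junk (w : List A) : Set ℝ :=
  if w = [] then (I m [])ᶜ else ∅

lemma junk_nil : junk m ([] : List A) = (I m [])ᶜ := by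
  simp [junk]

lemma junk_ne {w : List A} (h : w ≠ []) : junk m w = ∅ := by
  simp [junk, h]

lemma junk_nil' {w : List A} (h : w = []) : junk m w = (I m [])ᶜ := by
  subst h
  exact junk_nil m

lemma measurableSet_junk (w : List A) : MeasurableSet (junk m w) := by
  by_cases h : w = []
  · subst h
    rw [junk_nil]
    exact measurableSet_Ico.compl
  · rw [junk_ne m h]
    exact MeasurableSet.empty

lemma junk_inter (w : List A) : junk m w ∩ I m [] = ∅ := by
  by_cases h : w = []
  · subst h
    rw [junk_nil]
    exact Set.compl_inter_self _
  · rw [junk_ne m h]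
    exact Set.empty_inter _

lemma chain_zero (x : ℝ) : chain m x 0 = [] := rfl

open scoped Classical in
lemma chain_succ (x : ℝ) (n : ℕ) :
    chain m x (n + 1) =
      if h : ∃ a, x ∈ I m (chain m x n ++ [a]) then chain m x n ++ [h.choose]
      else chain m x n := rfl

lemma chain_mem {x : ℝ} (hx : x ∈ I m []) (n : ℕ) : x ∈ I m (chain m x n) := by
  induction n with
  | zero => exact hx
  | succ n ih =>
    rw [chain_succ]
    split_ifs with h
    · exact h.choose_spec
    · exact ih

include hm

lemma g_eq_inl {x : ℝ} {u : List A} (hxu : x ∈ J m u) : g m x = Sum.inl u := by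
  unfold g
  have h : ∃ w : List A, x ∈ J m w := ⟨u, hxu⟩
  refine (dif_pos h).trans ?_
  congr 1
  by_contra hne
  exact Set.disjoint_left.mp (J_pairwise_disjoint m hm hne) h.choose_spec hxu

lemma never_stop {x : ℝ} (hx : x ∈ I m []) (hnJ : ∀ u, x ∉ J m u) :
    ∀ n, ∃ a, x ∈ I m (chain m x n ++ [a]) := by
  intro n
  by_contra h
  exact hnJ _ ((stop_iff m hm (chain_mem m hx n)).mp h)

open scoped Classical in
lemma g_eq_inr {x : ℝ} (hx : x ∈ I m []) (hnJ : ∀ u, x ∉ J m u) :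
    ∃ f : ℕ → A, g m x = Sum.inr f ∧ ∀ n, chain m x n = (List.range n).map f := by
  have h2 := never_stop m hm hx hnJ
  have hd : ¬ ∃ w : List A, x ∈ J m w := not_exists.2 hnJ
  refine ⟨fun n => (h2 n).choose, ?_, ?_⟩
  · unfold g
    exact (dif_neg hd).trans (dif_pos h2)
  · intro n
    induction n with
    | zero => simp [chain_zero]
    | succ n ih =>
      rw [chain_succ, dif_pos (h2 n), List.range_succ, List.map_append, ← ih]
      rfl

lemma g_eq_junk {x : ℝ} (hx : x ∉ I m []) : g m x = Sum.inl [] := by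
  unfold g
  have hd : ¬ ∃ w : List A, x ∈ J m w := by
    rintro ⟨w, hw⟩
    exact hx (I_prefix_subset m hm (List.nil_prefix) (J_subset_I m hm w hw))
  refine (dif_neg hd).trans ?_
  have h2 : ¬ ∀ n, ∃ a, x ∈ I m (chain m x n ++ [a]) := by
    intro h
    obtain ⟨a, ha⟩ := h 0
    exact hx (I_prefix_subset m hm (List.nil_prefix) ha)
  exact dif_neg h2

lemma gx_mem_cone {x : ℝ} {w : List A} (hxw : x ∈ I m w) : g m x ∈ cone w := by
  have hx : x ∈ I m [] := I_prefix_subset m hm (List.nil_prefix) hxw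
  by_cases hJ : ∃ u, x ∈ J m u
  · obtain ⟨u, hu⟩ := hJ
    rw [g_eq_inl m hm hu]
    exact mem_cone_inl.2 (prefix_of_J_inter_I m hm hu hxw)
  · push_neg at hJ
    obtain ⟨f, hg, hchain⟩ := g_eq_inr m hm hx hJ
    rw [hg]
    apply mem_cone_inr.2
    intro i hi
    have h1 : chain m x w.length = w := by
      have hlen : (chain m x w.length).length = w.length := by
        rw [hchain]; simp
      by_contra hne
      exact Set.disjoint_left.mp (I_disjoint_same_length m hm hne hlen)
        (chain_mem m hx w.length) hxw
    have h3 : (List.range w.length).map f = w := (hchain _).symm.trans h1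
    rw [List.get_eq_getElem, List.getElem_of_eq h3.symm hi]
    simp

lemma mem_I_of_gx_mem_cone {x : ℝ} {w : List A} (hx : x ∈ I m [])
    (h : g m x ∈ cone w) : x ∈ I m w := by
  by_cases hJ : ∃ u, x ∈ J m u
  · obtain ⟨u, hu⟩ := hJ
    rw [g_eq_inl m hm hu] at h
    exact I_prefix_subset m hm (mem_cone_inl.1 h) (J_subset_I m hm u hu)
  · push_neg at hJ
    obtain ⟨f, hg, hchain⟩ := g_eq_inr m hm hx hJ
    rw [hg] at h
    have hf := mem_cone_inr.1 h
    have hcw : chain m x w.length = w := by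
      rw [hchain]
      apply List.ext_getElem (by simp)
      intro i h1 h2
      simp only [List.getElem_map, List.getElem_range]
      rw [hf i h2]
      simp
    rw [← hcw]
    exact chain_mem m hx w.length

lemma preimage_singleton (w : List A) :
    g m ⁻¹' {Sum.inl w} = J m w ∪ junk m w := by
  ext x
  simp only [Set.mem_preimage, Set.mem_singleton_iff, Set.mem_union]
  constructor
  · intro hgx
    by_cases hx : x ∈ I m []
    · by_cases hJ : ∃ u, x ∈ J m u
      · obtain ⟨u, hu⟩ := hJ
        rw [g_eq_inl m hm hu] at hgx
        injection hgx with hgx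
        left
        exact hgx ▸ hu
      · push_neg at hJ
        obtain ⟨f, hg, _⟩ := g_eq_inr m hm hx hJ
        rw [hg] at hgx
        exact absurd hgx Sum.inr_ne_inl
    · rw [g_eq_junk m hm hx] at hgx
      injection hgx with hgx
      right
      rw [junk_nil' m hgx.symm]
      exact hx
  · rintro (hxJ | hx)
    · exact g_eq_inl m hm hxJ
    · by_cases hw : w = []
      · subst hw
        rw [junk_nil] at hx
        exact g_eq_junk m hm hx
      · rw [junk_ne m hw] at hx
        exact absurd hx (Set.notMem_empty x)

lemma preimage_cone (w : List A) :
    g m ⁻¹' cone w = I m w ∪ junk m w := by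
  ext x
  simp only [Set.mem_preimage, Set.mem_union]
  constructor
  · intro hgx
    by_cases hx : x ∈ I m []
    · left
      exact mem_I_of_gx_mem_cone m hm hx hgx
    · rw [g_eq_junk m hm hx] at hgx
      have hw : w = [] := List.prefix_nil.mp (mem_cone_inl.1 hgx)
      right
      rw [junk_nil' m hw]
      exact hx
  · rintro (hxw | hx)
    · exact gx_mem_cone m hm hxw
    · by_cases hw : w = []
      · subst hw
        rw [junk_nil] at hx
        rw [g_eq_junk m hm hx]
        exact self_mem_cone []
      · rw [junk_ne m hw] at hx
        exact absurd hx (Set.notMem_empty x)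

lemma measurable_g : Measurable (g m) := by
  apply measurable_generateFrom
  rintro S ((rfl | ⟨w, rfl⟩) | ⟨w, rfl⟩)
  · simp
  · rw [preimage_singleton m hm]
    exact (measurableSet_Ico).union (measurableSet_junk m _)
  · rw [preimage_cone m hm]
    exact (measurableSet_Ico).union (measurableSet_junk m _)

omit hm

lemma L_nil : L m [] = 0 := rfl

lemma volume_J (w : List A) : volume (J m w) = (m {Sum.inl w} : ENNReal) := by
  rw [J, Real.volume_Ico, add_sub_cancel_left, ENNReal.ofReal_coe_nnreal]

lemma volume_I (w : List A) : volume (I m w) = (m (cone w) : ENNReal) := by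
  rw [I, Real.volume_Ico, add_sub_cancel_left, ENNReal.ofReal_coe_nnreal]

include hm

lemma J_subset_base (w : List A) : J m w ⊆ I m [] :=
  (J_subset_I m hm w).trans (I_prefix_subset m hm (List.nil_prefix))

lemma I_subset_base (w : List A) : I m w ⊆ I m [] :=
  I_prefix_subset m hm (List.nil_prefix)

/-- The extension measure. -/
noncomputable def nu : Measure (Words A) := (volume.restrict (I m [])).map (g m)

omit hm

include hm

lemma nu_singleton (w : List A) : nu m {Sum.inl w} = (m {Sum.inl w} : ENNReal) := by
  rw [nu, Measure.map_apply (measurable_g m hm)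
    (measurableSet_of_mem_Sinf (singleton_mem_Sinf w)),
    Measure.restrict_apply (measurable_g m hm
      (measurableSet_of_mem_Sinf (singleton_mem_Sinf w))),
    preimage_singleton m hm w, Set.union_inter_distrib_right, junk_inter m _,
    Set.inter_eq_self_of_subset_left (J_subset_base m hm w), Set.union_empty,
    volume_J m w]

lemma nu_cone (w : List A) : nu m (cone w) = (m (cone w) : ENNReal) := by
  rw [nu, Measure.map_apply (measurable_g m hm)
    (measurableSet_of_mem_Sinf (cone_mem_Sinf w)),
    Measure.restrict_apply (measurable_g m hm
      (measurableSet_of_mem_Sinf (cone_mem_Sinf w))),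
    preimage_cone m hm w, Set.union_inter_distrib_right, junk_inter m _,
    Set.inter_eq_self_of_subset_left (I_subset_base m hm w), Set.union_empty,
    volume_I m w]

lemma nu_spec (h0 : m ∅ = 0) : ∀ S ∈ Sinf A, nu m S = (m S : ENNReal) := by
  rintro S ((rfl | ⟨w, rfl⟩) | ⟨w, rfl⟩)
  · rw [measure_empty, h0, ENNReal.coe_zero]
  · exact nu_singleton m hm w
  · exact nu_cone m hm w

end Construction

end WordsAux

/-- Extension theorem for pre-measures on `S_∞`. -/
theorem extension_iff {A : Type*} [Fintype A] (m : Set (Words A) → NNReal)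
    (h0 : m ∅ = 0) :
    (∃! ν : Measure (Words A), ∀ S ∈ Sinf A, ν S = (m S : ENNReal)) ↔
    (∀ w : List A,
      m (cone w) = m {Sum.inl w} + ∑ a : A, m (cone (w ++ [a]))) := by
  classical
  constructor
  · rintro ⟨ν, hν, -⟩ w
    have hmeasU : ∀ a : A, MeasurableSet (cone (w ++ [a])) := fun a =>
      WordsAux.measurableSet_of_mem_Sinf (WordsAux.cone_mem_Sinf _)
    have hdis : Disjoint ({Sum.inl w} : Set (Words A)) (⋃ a : A, cone (w ++ [a])) := by
      rw [Set.disjoint_left]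
      rintro z hz hz2
      replace hz : z = Sum.inl w := hz
      subst hz
      obtain ⟨a, ha⟩ := Set.mem_iUnion.1 hz2
      exact WordsAux.inl_not_mem_cone_append ha
    have hpair : Pairwise (Function.onFun Disjoint fun a : A => cone (w ++ [a])) := fun a b hab =>
      WordsAux.disjoint_cone_sibling hab
    have key : ν (cone w) = ν {Sum.inl w} + ∑ a : A, ν (cone (w ++ [a])) := by
      rw [WordsAux.cone_eq_union w, measure_union hdis (MeasurableSet.iUnion hmeasU),
        measure_iUnion hpair hmeasU, tsum_fintype]
    rw [hν _ (WordsAux.cone_mem_Sinf w), hν _ (WordsAux.singleton_mem_Sinf w),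
      Finset.sum_congr rfl
        (fun a _ => hν _ (WordsAux.cone_mem_Sinf (w ++ [a])))] at key
    exact_mod_cast key
  · intro hm
    refine ⟨WordsAux.nu m, WordsAux.nu_spec m hm h0, ?_⟩
    intro ν' hν'
    haveI hfin : IsFiniteMeasure ν' := ⟨by
      rw [← WordsAux.cone_nil, hν' _ (WordsAux.cone_mem_Sinf [])]
      exact ENNReal.coe_lt_top⟩
    refine ext_of_generate_finite (Sinf A) rfl WordsAux.isPiSystem_Sinf
      (fun s hs => (hν' s hs).trans (WordsAux.nu_spec m hm h0 s hs).symm) ?_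
    rw [← WordsAux.cone_nil, hν' _ (WordsAux.cone_mem_Sinf []),
      WordsAux.nu_spec m hm h0 _ (WordsAux.cone_mem_Sinf [])]
end

section
/- Let F be a Set endofunctor, β : X → FX a coalgebra, and b_β(R) = (β × β)⁻¹(Rel(F)(R)). If g : 𝒫(X×X) → 𝒫(X×X) is compatible with b_β (i.e., monotone and R ⊆ b_β(R') implies g(R) ⊆ b_β(g(R'))), then any bisimulation up-to g (relation R with R ⊆ b_β(g(R))) is contained in a bisimulation (a relation S with S ⊆ b_β(S)). -/
open CategoryTheory

universe u

/-- The relation lifting `Rel(F)(R)` of a relation `R ⊆ X × X` along a `Set`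
endofunctor `F`. -/
def relLift (F : Type u ⥤ Type u) {X : Type u} (R : Set (X × X)) :
    Set (F.obj X × F.obj X) :=
  {p | ∃ d : F.obj R,
    p.1 = F.map (TypeCat.ofHom (fun r : R => (r : X × X).1)) d ∧
    p.2 = F.map (TypeCat.ofHom (fun r : R => (r : X × X).2)) d}

/-- The map `b_β(R) = (β × β)⁻¹(Rel(F)(R))`. -/
def bCoalg (F : Type u ⥤ Type u) {X : Type u} (β : X → F.obj X)
    (R : Set (X × X)) : Set (X × X) :=
  (fun p : X × X => (β p.1, β p.2)) ⁻¹' relLift F R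

lemma relLift_mono (F : Type u ⥤ Type u) {X : Type u} {R R' : Set (X × X)}
    (h : R ⊆ R') : relLift F R ⊆ relLift F R' := by
  rintro p ⟨d, h1, h2⟩
  refine ⟨F.map (TypeCat.ofHom (Set.inclusion h)) d, ?_, ?_⟩
  · rw [h1, ← FunctorToTypes.map_comp_apply]
    rfl
  · rw [h2, ← FunctorToTypes.map_comp_apply]
    rfl

lemma bCoalg_mono (F : Type u ⥤ Type u) {X : Type u} (β : X → F.obj X)
    {R R' : Set (X × X)} (h : R ⊆ R') : bCoalg F β R ⊆ bCoalg F β R' :=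
  Set.preimage_mono (relLift_mono F h)

/-- Any bisimulation up-to a compatible function `g` is contained in a bisimulation. -/
theorem bisim_up_to_compatible_contained_in_bisim (F : Type u ⥤ Type u)
    {X : Type u} (β : X → F.obj X)
    (g : Set (X × X) → Set (X × X))
    (hmono : Monotone g)
    (hcomp : ∀ R R' : Set (X × X), R ⊆ bCoalg F β R' → g R ⊆ bCoalg F β (g R'))
    (R : Set (X × X)) (hR : R ⊆ bCoalg F β (g R)) :
    ∃ S : Set (X × X), R ⊆ S ∧ S ⊆ bCoalg F β S := by
  refine ⟨⋃ n, g^[n] R, Set.subset_iUnion (fun n => g^[n] R) 0, ?_⟩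
  have key : ∀ n, g^[n] R ⊆ bCoalg F β (g^[n+1] R) := by
    intro n
    induction n with
    | zero => simpa using hR
    | succ n ih =>
      have := hcomp _ _ ih
      simpa [Function.iterate_succ_apply'] using this
  refine Set.iUnion_subset fun n => (key n).trans (bCoalg_mono F β ?_)
  exact Set.subset_iUnion (fun n => g^[n] R) (n+1)
end

section
/- Let V be a finite-dimensional real vector space and β = ⟨β₁, β_*, a↦τ_a⟩ : V → ℝ × ℝ × V^A a coalgebra where β₁, β_* are linear forms and each τ_a is linear. Then the functions a(R) = {(u+u', v+v') : (u,v) ∈ R, (u',v') ∈ R} and m_λ(R) = {(λu, λv) : (u,v) ∈ R} are compatible with b_β for every λ ∈ ℝ: if R ⊆ b_β(R') then a(R) ⊆ b_β(a(R')) and m_λ(R) ⊆ b_β(m_λ(R')). -/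
/-- `b_β` for a linear Moore coalgebra `β = ⟨β₁, β_*, a ↦ τ_a⟩ : V → ℝ × ℝ × V^A`. -/
def bLin {A V : Type*} [AddCommGroup V] [Module ℝ V]
    (b1 bs : V →ₗ[ℝ] ℝ) (τ : A → V →ₗ[ℝ] V) (R : Set (V × V)) : Set (V × V) :=
  {p | b1 p.1 = b1 p.2 ∧ bs p.1 = bs p.2 ∧ ∀ a : A, (τ a p.1, τ a p.2) ∈ R}

/-- Pairwise sum of related pairs. -/
def addRel {V : Type*} [AddCommGroup V] (R : Set (V × V)) : Set (V × V) :=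
  {p | ∃ q ∈ R, ∃ q' ∈ R, p = (q.1 + q'.1, q.2 + q'.2)}

/-- Scalar multiple of related pairs. -/
def smulRel {V : Type*} [AddCommGroup V] [Module ℝ V] (lam : ℝ)
    (R : Set (V × V)) : Set (V × V) :=
  {p | ∃ q ∈ R, p = (lam • q.1, lam • q.2)}

/-- The up-to-sum and up-to-scalar-multiplication functions are compatible with
`b_β` for a linear coalgebra on a finite-dimensional real vector space. -/
theorem add_smul_compatible {A V : Type*} [AddCommGroup V] [Module ℝ V]
    [FiniteDimensional ℝ V]
    (b1 bs : V →ₗ[ℝ] ℝ) (τ : A → V →ₗ[ℝ] V) (lam : ℝ)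
    (R R' : Set (V × V)) (h : R ⊆ bLin b1 bs τ R') :
    addRel R ⊆ bLin b1 bs τ (addRel R') ∧
    smulRel lam R ⊆ bLin b1 bs τ (smulRel lam R') := by
  constructor
  · rintro p ⟨q, hq, q', hq', rfl⟩
    obtain ⟨h1, h2, h3⟩ := h hq
    obtain ⟨h1', h2', h3'⟩ := h hq'
    refine ⟨by simp [h1, h1'], by simp [h2, h2'], fun a => ?_⟩
    exact ⟨_, h3 a, _, h3' a, by simp⟩
  · rintro p ⟨q, hq, rfl⟩
    obtain ⟨h1, h2, h3⟩ := h hq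
    refine ⟨by simp [h1], by simp [h2], fun a => ?_⟩
    exact ⟨_, h3 a, by simp⟩
end

section
/- The map Π : 𝔻(A^∞) → [0,1] × [0,1] × (𝔻A^∞)^A defined by Π(m) = ⟨m(A^∞), m({ε}), a ↦ m_a⟩ is injective after composing with the final Moore-coalgebra morphism: if φ_Π denotes the unique coalgebra morphism from (𝔻A^∞, Π) to the final F-coalgebra (([0,1]×[0,1])^{A^*}, ω), then φ_Π is injective. Equivalently, two sub-probability measures m, m' on A^∞ with m(wA^∞) = m'(wA^∞) and m({w}) = m'({w}) for all finite words w are equal. -/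
open MeasureTheory

lemma inl_mem_cone {A : Type*} {u w : List A} :
    (Sum.inl u : Words A) ∈ cone w ↔ w <+: u := by
  constructor
  · rintro ⟨y, hy⟩
    cases y with
    | inl t =>
      simp only [wcat] at hy
      exact ⟨t, by injection hy⟩
    | inr g => simp [wcat] at hy
  · rintro ⟨t, ht⟩
    exact ⟨Sum.inl t, by simp [wcat, ht]; rfl⟩

lemma inr_mem_cone {A : Type*} {f : ℕ → A} {w : List A} :
    (Sum.inr f : Words A) ∈ cone w ↔ ∀ i (h : i < w.length), f i = w.get ⟨i, h⟩ := by
  constructor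
  · rintro ⟨y, hy⟩
    cases y with
    | inl t => simp [wcat] at hy
    | inr g =>
      simp only [wcat] at hy
      injection hy with hy
      intro i h
      rw [← hy]
      simp [h]
  · intro h
    refine ⟨Sum.inr fun n => f (n + w.length), ?_⟩
    simp only [wcat]
    congr 1
    funext n
    split_ifs with hn
    · exact (h n hn).symm
    · rw [Nat.sub_add_cancel (le_of_not_gt hn)]

lemma cone_subset {A : Type*} {v w : List A} (h : v <+: w) : cone w ⊆ cone v := by
  intro x hx
  cases x with
  | inl u =>
    erw [inl_mem_cone] at hx ⊢
    exact h.trans hx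
  | inr f =>
    erw [inr_mem_cone] at hx ⊢
    intro i hi
    have hi' : i < w.length := lt_of_lt_of_le hi h.length_le
    rw [hx i hi']
    simp only [List.get_eq_getElem]
    exact (h.getElem hi).symm

lemma prefix_of_agree {A : Type*} {f : ℕ → A} {w v : List A}
    (hw : ∀ i (h : i < w.length), f i = w.get ⟨i, h⟩)
    (hv : ∀ i (h : i < v.length), f i = v.get ⟨i, h⟩)
    (hlen : w.length ≤ v.length) : w <+: v := by
  rw [List.prefix_iff_eq_take]
  apply List.ext_getElem
  · simp [Nat.min_eq_left hlen]
  · intro i h1 h2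
    have hiv : i < v.length := lt_of_lt_of_le h1 hlen
    simp only [List.getElem_take]
    have h3 := hw i h1
    have h4 := hv i hiv
    simp only [List.get_eq_getElem] at h3 h4
    rw [← h3, h4]

lemma comparable_of_mem {A : Type*} {x : Words A} {w v : List A}
    (hw : x ∈ cone w) (hv : x ∈ cone v) : w <+: v ∨ v <+: w := by
  cases x with
  | inl u =>
    erw [inl_mem_cone] at hw hv
    exact List.prefix_or_prefix_of_prefix hw hv
  | inr f =>
    erw [inr_mem_cone] at hw hv
    rcases le_total w.length v.length with h | h
    · exact Or.inl (prefix_of_agree hw hv h)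
    · exact Or.inr (prefix_of_agree hv hw h)

lemma empty_mem_Sinf {A : Type*} : (∅ : Set (Words A)) ∈ Sinf A :=
  Or.inl (Or.inl rfl)

lemma singleton_mem_Sinf {A : Type*} (w : List A) :
    ({Sum.inl w} : Set (Words A)) ∈ Sinf A := Or.inl (Or.inr ⟨w, rfl⟩)

lemma cone_mem_Sinf {A : Type*} (w : List A) : cone w ∈ Sinf A := Or.inr ⟨w, rfl⟩

lemma isPiSystem_Sinf {A : Type*} : IsPiSystem (Sinf A) := by
  rintro s hs t ht hst
  rcases hs with (rfl | ⟨w, rfl⟩) | ⟨w, rfl⟩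
  · simpa using empty_mem_Sinf
  all_goals rcases ht with (rfl | ⟨v, rfl⟩) | ⟨v, rfl⟩
  · simpa using empty_mem_Sinf
  · -- singleton ∩ singleton
    obtain ⟨x, hx1, hx2⟩ := hst
    simp only [Set.mem_singleton_iff] at hx1 hx2
    subst hx1
    obtain rfl : w = v := by injection hx2
    show ({Sum.inl w} : Set (Words A)) ∩ {Sum.inl w} ∈ Sinf A
    rw [Set.inter_self]
    exact singleton_mem_Sinf w
  · -- singleton ∩ cone
    obtain ⟨x, hx1, hx2⟩ := hst
    simp only [Set.mem_singleton_iff] at hx1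
    subst hx1
    rw [Set.inter_eq_self_of_subset_left (by exact Set.singleton_subset_iff.mpr hx2)]
    exact singleton_mem_Sinf w
  · simpa using empty_mem_Sinf
  · -- cone ∩ singleton
    obtain ⟨x, hx1, hx2⟩ := hst
    simp only [Set.mem_singleton_iff] at hx2
    subst hx2
    rw [Set.inter_eq_self_of_subset_right (by exact Set.singleton_subset_iff.mpr hx1)]
    exact singleton_mem_Sinf v
  · -- cone ∩ cone
    obtain ⟨x, hx1, hx2⟩ := hst
    rcases comparable_of_mem hx1 hx2 with h | h
    · rw [Set.inter_eq_self_of_subset_right (cone_subset h)]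
      exact cone_mem_Sinf v
    · rw [Set.inter_eq_self_of_subset_left (cone_subset h)]
      exact cone_mem_Sinf w

lemma cone_nil_eq_univ {A : Type*} : cone ([] : List A) = Set.univ := by
  ext x
  simp only [Set.mem_univ, iff_true]
  cases x with
  | inl u => exact inl_mem_cone.mpr (List.nil_prefix)
  | inr f => exact inr_mem_cone.mpr (fun i h => by simp at h)

/-- Two sub-probability measures on `A^∞` that agree on all cones `wA^∞` and all
singletons of finite words are equal (injectivity of `φ_Π`). -/
theorem subprob_eq_of_eq_on_cones_and_singletons {A : Type*} [Fintype A]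
    (m m' : Measure (Words A)) (hm : m Set.univ ≤ 1) (hm' : m' Set.univ ≤ 1)
    (hcone : ∀ w : List A, m (cone w) = m' (cone w))
    (hsing : ∀ w : List A, m {Sum.inl w} = m' {Sum.inl w}) :
    m = m' := by
  have hfin : IsFiniteMeasure m := ⟨lt_of_le_of_lt hm (by norm_num)⟩
  refine ext_of_generate_finite (Sinf A) rfl isPiSystem_Sinf ?_ ?_
  · rintro s ((rfl | ⟨w, rfl⟩) | ⟨w, rfl⟩)
    · simp
    · exact hsing w
    · exact hcone w
  · rw [← cone_nil_eq_univ]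
    exact hcone []
end
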